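/- Let E be a real normed vector space, Θ ⊆ E a nonempty closed convex set, and f₁, …, f_N : E → ℝ functions each of which is CSN with smoothness β > 0. Let θ₁, …, θ_N ∈ Θ, let ε̂ = (1/N) inf_{θ ∈ Θ} Σ_{n=1}^N f_n(θ), and let Ê ≥ ε̂. Let R > 0 and set η* = 1/(2(β + √(β² + βNÊ/(2R²)))). Define the linearized regret Regret(⟨f_n′(θ_n), ·⟩) := Σ_{n=1}^N f_n′(θ_n)(θ_n) − inf_{θ ∈ Θ} Σ_{n=1}^N f_n′(θ_n)(θ). If Regret(f_n) ≤ Regret(⟨f_n′(θ_n), ·⟩) and Regret(⟨f_n′(θ_n), ·⟩) ≤ R²/η* + (η*/2) Σ_{n=1}^N ‖f_n′(θ_n)‖², then Regret(⟨f_n′(θ_n), ·⟩) ≤ 8βR² + √(8βR²NÊ). -/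

import Mathlib

open Finset

/-- A differentiable function `f : E → ℝ` is CSN with smoothness `β` if it is convex,
non-negative, and its Fréchet derivative is `β`-Lipschitz in the operator (dual) norm. -/
def IsCSN {E : Type*} [NormedAddCommGroup E] [NormedSpace ℝ E]
    (f : E → ℝ) (β : ℝ) : Prop :=
  ConvexOn ℝ Set.univ f ∧ (∀ x, 0 ≤ f x) ∧ Differentiable ℝ f ∧
    ∀ x y, ‖fderiv ℝ f x - fderiv ℝ f y‖ ≤ β * ‖x - y‖

/-- `Regret(f_n) = Σ_{n=1}^N f_n(θ_n) − inf_{θ ∈ Θ} Σ_{n=1}^N f_n(θ)`. -/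
noncomputable def regret {E : Type*} (Θ : Set E) (N : ℕ)
    (f : ℕ → E → ℝ) (θ : ℕ → E) : ℝ :=
  (∑ n ∈ Finset.Icc 1 N, f n (θ n))
    - sInf ((fun x => ∑ n ∈ Finset.Icc 1 N, f n x) '' Θ)

/-- `Regret(⟨f_n′(θ_n), ·⟩) = Σ_{n=1}^N f_n′(θ_n)(θ_n) − inf_{θ ∈ Θ} Σ_{n=1}^N f_n′(θ_n)(θ)`. -/
noncomputable def linRegret {E : Type*} [NormedAddCommGroup E] [NormedSpace ℝ E]
    (Θ : Set E) (N : ℕ) (f : ℕ → E → ℝ) (θ : ℕ → E) : ℝ :=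
  (∑ n ∈ Finset.Icc 1 N, fderiv ℝ (f n) (θ n) (θ n))
    - sInf ((fun x => ∑ n ∈ Finset.Icc 1 N, fderiv ℝ (f n) (θ n) x) '' Θ)

/-- Descent lemma in a normed space. -/
lemma descent_aux {E : Type*} [NormedAddCommGroup E] [NormedSpace ℝ E]
    {f : E → ℝ} {β : ℝ}
    (hd : Differentiable ℝ f)
    (hlip : ∀ x y, ‖fderiv ℝ f x - fderiv ℝ f y‖ ≤ β * ‖x - y‖)
    (x v : E) :
    f (x + v) ≤ f x + fderiv ℝ f x v + β / 2 * ‖v‖ ^ 2 := by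
  set L := fderiv ℝ f x with hL
  set g : ℝ → ℝ := fun t => β / 2 * t ^ 2 * ‖v‖ ^ 2 + t * L v + f x - f (x + t • v) with hgdef
  have hline : ∀ t : ℝ, HasDerivAt (fun t : ℝ => x + t • v) v t := by
    intro t
    simpa using ((hasDerivAt_id t).smul_const v).const_add x
  have hfd : ∀ t : ℝ, HasDerivAt (fun t => f (x + t • v)) (fderiv ℝ f (x + t • v) v) t :=
    fun t => (hd (x + t • v)).hasFDerivAt.comp_hasDerivAt t (hline t)
  have hg : ∀ t : ℝ, HasDerivAt g
      (β * t * ‖v‖ ^ 2 + L v - fderiv ℝ f (x + t • v) v) t := by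
    intro t
    have h1 : HasDerivAt (fun t : ℝ => β / 2 * t ^ 2 * ‖v‖ ^ 2) (β * t * ‖v‖ ^ 2) t := by
      have := ((hasDerivAt_pow 2 t).const_mul (β / 2)).mul_const (‖v‖ ^ 2)
      refine this.congr_deriv ?_
      rw [show (2:ℕ) - 1 = 1 from rfl]; push_cast; ring
    have h2 : HasDerivAt (fun t : ℝ => t * L v) (L v) t := by
      simpa using (hasDerivAt_id t).mul_const (L v)
    exact (((h1.add h2).add_const (f x)).sub (hfd t))
  have hmono : MonotoneOn g (Set.Icc (0:ℝ) 1) := by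
    apply monotoneOn_of_deriv_nonneg (convex_Icc 0 1)
    · exact (fun t _ => (hg t).differentiableAt.continuousAt.continuousWithinAt)
    · exact fun t _ => ((hg t).differentiableAt).differentiableWithinAt
    · intro t ht
      rw [interior_Icc] at ht
      rw [(hg t).deriv]
      have hdiff : fderiv ℝ f (x + t • v) v - L v
          = ((fderiv ℝ f (x + t • v)) - L) v := by simp
      have hb : fderiv ℝ f (x + t • v) v - L v ≤ β * t * ‖v‖ ^ 2 := by
        rw [hdiff]
        calc ((fderiv ℝ f (x + t • v)) - L) v ≤ ‖((fderiv ℝ f (x + t • v)) - L) v‖ :=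
              le_abs_self _
          _ ≤ ‖(fderiv ℝ f (x + t • v)) - L‖ * ‖v‖ :=
              ContinuousLinearMap.le_opNorm _ _
          _ ≤ (β * ‖(x + t • v) - x‖) * ‖v‖ := by
              gcongr
              exact hlip _ _
          _ = β * (|t| * ‖v‖) * ‖v‖ := by
              rw [add_sub_cancel_left, norm_smul, Real.norm_eq_abs]
          _ = β * t * ‖v‖ ^ 2 := by
              rw [abs_of_pos ht.1]; ring
      linarith
  have h01 := hmono (Set.mem_Icc.2 ⟨le_refl 0, zero_le_one⟩)
      (Set.mem_Icc.2 ⟨zero_le_one, le_refl 1⟩) zero_le_one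
  have hg0 : g 0 = 0 := by simp [hgdef]
  have hg1 : g 1 = β / 2 * ‖v‖ ^ 2 + L v + f x - f (x + v) := by simp [hgdef]
  rw [hg0, hg1] at h01
  linarith

/-- Self-bounding property of CSN functions. -/
lemma self_bound {E : Type*} [NormedAddCommGroup E] [NormedSpace ℝ E]
    {f : E → ℝ} {β : ℝ} (hβ : 0 < β) (h : IsCSN f β) (x : E) :
    ‖fderiv ℝ f x‖ ^ 2 ≤ 2 * β * f x := by
  obtain ⟨-, hnn, hd, hlip⟩ := h
  set L := fderiv ℝ f x with hL
  have hfx : (0:ℝ) ≤ 2 * β * f x := mul_nonneg (by positivity) (hnn x)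
  have key : ∀ v : E, |L v| ≤ Real.sqrt (2 * β * f x) * ‖v‖ := by
    intro v
    rcases eq_or_ne v 0 with rfl | hv
    · simp
    · have hvn : (0:ℝ) < ‖v‖ := norm_pos_iff.2 hv
      set a := L v with ha
      set w : E := -(a / (β * ‖v‖ ^ 2)) • v with hw
      have hdesc := descent_aux hd hlip x w
      have h0 : 0 ≤ f (x + w) := hnn _
      have hLw : L w = -(a / (β * ‖v‖ ^ 2)) * a := by
        rw [hw, map_smul]; rfl
      have hwn : ‖w‖ ^ 2 = (a / (β * ‖v‖ ^ 2)) ^ 2 * ‖v‖ ^ 2 := by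
        rw [hw, norm_smul, mul_pow, Real.norm_eq_abs, abs_neg, sq_abs]
      have hkey : a ^ 2 ≤ 2 * β * f x * ‖v‖ ^ 2 := by
        rw [hLw, hwn] at hdesc
        have hβv : β * ‖v‖ ^ 2 ≠ 0 := by positivity
        have := h0.trans hdesc
        have hexp : f x + -(a / (β * ‖v‖ ^ 2)) * a
            + β / 2 * ((a / (β * ‖v‖ ^ 2)) ^ 2 * ‖v‖ ^ 2)
            = f x - a ^ 2 / (2 * (β * ‖v‖ ^ 2)) := by
          field_simp
          ring
        rw [hexp] at this
        have h2 : a ^ 2 / (2 * (β * ‖v‖ ^ 2)) ≤ f x := by linarith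
        have h3 : (0:ℝ) < 2 * (β * ‖v‖ ^ 2) := by positivity
        rw [div_le_iff₀ h3] at h2
        nlinarith
      calc |a| = Real.sqrt (a ^ 2) := (Real.sqrt_sq_eq_abs a).symm
        _ ≤ Real.sqrt (2 * β * f x * ‖v‖ ^ 2) := Real.sqrt_le_sqrt hkey
        _ = Real.sqrt (2 * β * f x) * Real.sqrt (‖v‖ ^ 2) := by
            rw [Real.sqrt_mul hfx]
        _ = Real.sqrt (2 * β * f x) * ‖v‖ := by
            rw [Real.sqrt_sq (norm_nonneg v)]
  have hop : ‖L‖ ≤ Real.sqrt (2 * β * f x) :=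
    ContinuousLinearMap.opNorm_le_bound _ (Real.sqrt_nonneg _)
      (fun v => by simpa [Real.norm_eq_abs] using key v)
  calc ‖L‖ ^ 2 ≤ Real.sqrt (2 * β * f x) ^ 2 :=
        pow_le_pow_left₀ (norm_nonneg _) hop 2
    _ = 2 * β * f x := Real.sq_sqrt hfx


set_option maxHeartbeats 1000000 in
/-- Lemma D.3: bias-dependent bound for the regret to the linear functions defined by
the gradients, with the tuned constant stepsize. -/
theorem bias_dependent_linearized_regret
    {E : Type*} [NormedAddCommGroup E] [NormedSpace ℝ E]
    (Θ : Set E) (hne : Θ.Nonempty) (hcl : IsClosed Θ) (hcv : Convex ℝ Θ)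
    (N : ℕ) (hN : 1 ≤ N)
    (f : ℕ → E → ℝ) (β : ℝ) (hβ : 0 < β)
    (hCSN : ∀ n ∈ Finset.Icc 1 N, IsCSN (f n) β)
    (θ : ℕ → E) (hθ : ∀ n ∈ Finset.Icc 1 N, θ n ∈ Θ)
    (εhat Ehat R ηstar : ℝ)
    (hεhat : εhat = (1 / (N : ℝ)) * sInf ((fun x => ∑ n ∈ Finset.Icc 1 N, f n x) '' Θ))
    (hEhat : εhat ≤ Ehat)
    (hR : 0 < R)
    (hη : ηstar = 1 / (2 * (β + Real.sqrt (β ^ 2 + β * N * Ehat / (2 * R ^ 2)))))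
    (hreg1 : regret Θ N f θ ≤ linRegret Θ N f θ)
    (hreg2 : linRegret Θ N f θ ≤ R ^ 2 / ηstar
        + (ηstar / 2) * ∑ n ∈ Finset.Icc 1 N, ‖fderiv ℝ (f n) (θ n)‖ ^ 2) :
    linRegret Θ N f θ ≤ 8 * β * R ^ 2 + Real.sqrt (8 * β * R ^ 2 * N * Ehat) := by
  have hNpos : (0:ℝ) < N := by exact_mod_cast hN
  have hNne : (N:ℝ) ≠ 0 := ne_of_gt hNpos
  set L := linRegret Θ N f θ with hLdef
  set S := ∑ n ∈ Finset.Icc 1 N, f n (θ n) with hSdef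
  have hInf_nonneg : 0 ≤ sInf ((fun x => ∑ n ∈ Finset.Icc 1 N, f n x) '' Θ) := by
    apply le_csInf (hne.image _)
    rintro b ⟨y, hy, rfl⟩
    exact Finset.sum_nonneg fun n hn => (hCSN n hn).2.1 y
  have hε_nonneg : 0 ≤ εhat := by
    rw [hεhat]; exact mul_nonneg (by positivity) hInf_nonneg
  have hE : 0 ≤ Ehat := hε_nonneg.trans hEhat
  have hInf_eq : sInf ((fun x => ∑ n ∈ Finset.Icc 1 N, f n x) '' Θ) = N * εhat := by
    rw [hεhat]; field_simp
  have hS_le : S ≤ L + N * Ehat := by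
    have h1 : S - N * εhat ≤ L := by
      have := hreg1
      simp only [regret, hInf_eq] at this
      exact this
    nlinarith [mul_le_mul_of_nonneg_left hEhat (le_of_lt hNpos)]
  have hS_nonneg : 0 ≤ S :=
    Finset.sum_nonneg fun n hn => (hCSN n hn).2.1 _
  have hgrad : ∑ n ∈ Finset.Icc 1 N, ‖fderiv ℝ (f n) (θ n)‖ ^ 2 ≤ 2 * β * S := by
    rw [hSdef, Finset.mul_sum]
    exact Finset.sum_le_sum fun n hn => self_bound hβ (hCSN n hn) (θ n)
  -- abbreviations
  set c := β * (N:ℝ) * Ehat / (2 * R ^ 2) with hc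
  have hc0 : 0 ≤ c := by positivity
  set s := Real.sqrt (β ^ 2 + c) with hs
  set t := Real.sqrt c with ht
  have hs0 : 0 ≤ s := Real.sqrt_nonneg _
  have ht0 : 0 ≤ t := Real.sqrt_nonneg _
  have hs2 : s ^ 2 = β ^ 2 + c := Real.sq_sqrt (by positivity)
  have ht2 : t ^ 2 = c := Real.sq_sqrt hc0
  have hsβ : β ≤ s := by nlinarith [sq_nonneg (s - β), sq_nonneg (s + β)]
  have hst : t ≤ s := by nlinarith [sq_nonneg (s - t), sq_nonneg (s + t)]
  have hηpos : 0 < ηstar := by rw [hη]; positivity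
  have hD : (0:ℝ) < 2 * (β + s) := by positivity
  have hDne : (2 * (β + s)) ≠ 0 := ne_of_gt hD
  have hchain : L ≤ R ^ 2 / ηstar + ηstar * β * (L + N * Ehat) := by
    have h1 : (ηstar / 2) * ∑ n ∈ Finset.Icc 1 N, ‖fderiv ℝ (f n) (θ n)‖ ^ 2
        ≤ (ηstar / 2) * (2 * β * S) :=
      mul_le_mul_of_nonneg_left hgrad (by positivity)
    have h2 : (ηstar / 2) * (2 * β * S) ≤ (ηstar / 2) * (2 * β * (L + N * Ehat)) := by
      have h2b : 2 * β * S ≤ 2 * β * (L + N * Ehat) :=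
        mul_le_mul_of_nonneg_left hS_le (by positivity)
      exact mul_le_mul_of_nonneg_left h2b (by positivity)
    have h3 : (ηstar / 2) * (2 * β * (L + N * Ehat)) = ηstar * β * (L + N * Ehat) := by ring
    linarith [hreg2]
  have hfinal : L * (2 * (β + s)) ≤ R ^ 2 * (2 * (β + s)) ^ 2 + β * L + β * ((N:ℝ) * Ehat) := by
    have h := mul_le_mul_of_nonneg_right hchain (le_of_lt hD)
    calc L * (2 * (β + s))
        ≤ (R ^ 2 / ηstar + ηstar * β * (L + N * Ehat)) * (2 * (β + s)) := h
      _ = R ^ 2 * (2 * (β + s)) ^ 2 + β * L + β * ((N:ℝ) * Ehat) := by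
          rw [hη]; field_simp; ring
  have hβNE : β * ((N:ℝ) * Ehat) = 2 * R ^ 2 * t ^ 2 := by
    rw [ht2, hc]; field_simp
  have hsqrt : Real.sqrt (8 * β * R ^ 2 * N * Ehat) = 4 * R ^ 2 * t := by
    have h1 : 8 * β * R ^ 2 * (N:ℝ) * Ehat = (4 * R ^ 2) ^ 2 * c := by
      rw [hc]; field_simp; ring
    rw [ht, h1, Real.sqrt_mul (by positivity), Real.sqrt_sq (by positivity)]
  rw [hsqrt]
  have hs2' : s ^ 2 = β ^ 2 + t ^ 2 := by rw [hs2, ht2]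
  have hpos : (0:ℝ) < β + 2 * s := by positivity
  have hkey : L * (β + 2 * s) ≤ 4 * R ^ 2 * (β + s) ^ 2 + 2 * R ^ 2 * t ^ 2 := by
    have hrearr : L * (2 * (β + s)) - β * L = L * (β + 2 * s) := by ring
    have hrr : R ^ 2 * (2 * (β + s)) ^ 2 = 4 * R ^ 2 * (β + s) ^ 2 := by ring
    linarith [hfinal, hβNE]
  have hinner : (0:ℝ) ≤ 4 * β * s + 2 * t * β + 4 * t * s - 3 * t ^ 2 := by
    nlinarith [mul_nonneg (sub_nonneg.2 hst) ht0, mul_nonneg hβ.le hs0,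
      mul_nonneg hβ.le ht0, sq_nonneg t]
  have hs2R : R ^ 2 * s ^ 2 = R ^ 2 * (β ^ 2 + t ^ 2) := by rw [hs2']
  have hub : 4 * R ^ 2 * (β + s) ^ 2 + 2 * R ^ 2 * t ^ 2
      ≤ (8 * β * R ^ 2 + 4 * R ^ 2 * t) * (β + 2 * s) := by
    nlinarith [mul_nonneg (mul_pos hR hR).le hinner, hs2R]
  exact le_of_mul_le_mul_right (hkey.trans hub) hpos
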